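/- Schur's Pfaffian identity: for an even number of variables y_1,...,y_k (k even), Pf( ((y_i − y_j)/(y_i + y_j))_{1≤i,j≤k} ) = ∏_{1≤i<j≤k} (y_i − y_j)/(y_i + y_j). -/

import Mathlib

def pf {R : Type*} [CommRing R] : (m : ℕ) → Matrix (Fin (2*m)) (Fin (2*m)) R → R
  | 0, _ => 1
  | (m+1), M =>
      ∑ j : Fin (2*m+1), (-1)^(j : ℕ) * M 0 j.succ *
        pf m (M.submatrix (fun i => (j.succAbove i).succ) (fun i => (j.succAbove i).succ))

open Finset Polynomial

private lemma pairs_cons {R : Type*} [CommRing R] {n : ℕ} (b : Fin (n+1) → Fin (n+1) → R) :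
    ∏ i, ∏ k ∈ Finset.Ioi i, b i k
      = (∏ l : Fin n, b 0 l.succ) * ∏ i : Fin n, ∏ k ∈ Finset.Ioi i, b i.succ k.succ := by
  rw [Fin.prod_univ_succ]
  congr 1
  · exact Fin.prod_Ioi_zero _
  · exact Finset.prod_congr rfl fun i _ => Fin.prod_Ioi_succ _ i

private lemma pairs_erase {R : Type*} [CommRing R] (ε : R) : ∀ {n : ℕ}
    (b : Fin (n+1) → Fin (n+1) → R), (∀ p q, b p q = ε * b q p) → ∀ (j : Fin (n+1)),
    ∏ i, ∏ k ∈ Finset.Ioi i, b i k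
      = ε^(j:ℕ) * (∏ i : Fin n, b j (j.succAbove i)) *
        ∏ i : Fin n, ∏ k ∈ Finset.Ioi i, b (j.succAbove i) (j.succAbove k) := by
  intro n
  induction n with
  | zero =>
      intro b hb j
      have : j = 0 := Fin.fin_one_eq_zero j
      subst this
      simp
  | succ n ih =>
      intro b hb j
      cases j using Fin.cases with
      | zero => simpa using pairs_cons b
      | succ j' =>
          rw [pairs_cons b, ih (fun p q => b p.succ q.succ) (fun p q => hb _ _) j',
            Fin.prod_univ_succAbove (fun l => b 0 l.succ) j',
            Fin.prod_univ_succ (fun i => b j'.succ (j'.succ.succAbove i)),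
            pairs_cons (fun i k => b (j'.succ.succAbove i) (j'.succ.succAbove k))]
          simp only [Fin.succ_succAbove_zero, Fin.succ_succAbove_succ, Fin.val_succ]
          rw [hb 0 j'.succ, pow_succ]
          ring

private lemma prod_neg {K : Type*} [CommRing K] {n : ℕ} (g : Fin n → K) :
    ∏ i, -(g i) = (-1)^n * ∏ i, g i := by
  calc ∏ i, -(g i) = ∏ i : Fin n, (-1 : K) * g i := by simp
    _ = (-1)^n * ∏ i, g i := by
        rw [Finset.prod_mul_distrib, Finset.prod_const, Finset.card_univ, Fintype.card_fin]

private lemma prod_neg_even {K : Type*} [CommRing K] {m : ℕ} (g : Fin (2*m) → K) :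
    ∏ i, -(g i) = ∏ i, g i := by
  rw [_root_.prod_neg, Even.neg_one_pow ⟨m, by ring⟩, one_mul]

private lemma prod_neg_odd {K : Type*} [CommRing K] {m : ℕ} (g : Fin (2*m+1) → K) :
    ∏ i, -(g i) = -∏ i, g i := by
  rw [_root_.prod_neg, Odd.neg_one_pow ⟨m, by ring⟩, neg_one_mul]

section Dagger
variable {K : Type*} [Field K] {m : ℕ}

private def wgt (z : Fin (2*m+1) → K) (j : Fin (2*m+1)) : K :=
  ∏ i : Fin (2*m), ((z j + z (j.succAbove i)) / (z j - z (j.succAbove i)))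

variable (z : Fin (2*m+1) → K)

private lemma wgt_mul (hd : ∀ i j, i ≠ j → z i ≠ z j) (j : Fin (2*m+1)) :
    wgt z j * ∏ i : Fin (2*m), (z j - z (j.succAbove i))
      = ∏ i : Fin (2*m), (z j + z (j.succAbove i)) := by
  rw [wgt, ← Finset.prod_mul_distrib]
  refine Finset.prod_congr rfl fun i _ => ?_
  exact div_mul_cancel₀ _ (sub_ne_zero.mpr (hd _ _ (Fin.succAbove_ne j i).symm))

private lemma coeff_of_monic {p : K[X]} (hp : p.Monic) {N M : ℕ} (hdeg : p.natDegree = N)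
    (h : N ≤ M) : p.coeff M = if M = N then 1 else 0 := by
  rcases eq_or_lt_of_le h with rfl | h
  · rw [if_pos rfl, ← hdeg, hp.coeff_natDegree]
  · rw [if_neg (by omega), coeff_eq_zero_of_natDegree_lt (by omega)]

private lemma sum_wgt (hd : ∀ i j, i ≠ j → z i ≠ z j) (hs : ∀ i j, z i + z j ≠ 0) :
    ∑ j, wgt z j = 1 := by
  classical
  set P : K[X] := ∏ j : Fin (2*m+1), (X - C (z j)) with hP
  set Q : K[X] := ∏ j : Fin (2*m+1), (X + C (z j)) with hQ
  set A : Fin (2*m+1) → K[X] :=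
    fun j => (X + C (z j)) * ∏ i : Fin (2*m), (X - C (z (j.succAbove i))) with hA
  have hPm : P.Monic := monic_prod_of_monic _ _ fun j _ => monic_X_sub_C _
  have hPd : P.natDegree = 2*m+1 := by
    rw [hP, natDegree_prod_of_monic _ _ fun j _ => monic_X_sub_C _]; simp
  have hQm : Q.Monic := monic_prod_of_monic _ _ fun j _ => monic_X_add_C _
  have hQd : Q.natDegree = 2*m+1 := by
    rw [hQ, natDegree_prod_of_monic _ _ fun j _ => monic_X_add_C _]; simp
  have hprodm : ∀ j : Fin (2*m+1),
      (∏ i : Fin (2*m), (X - C (z (j.succAbove i))) : K[X]).Monic :=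
    fun j => monic_prod_of_monic _ _ fun i _ => monic_X_sub_C _
  have hAm : ∀ j, (A j).Monic := fun j => (monic_X_add_C _).mul (hprodm j)
  have hAd : ∀ j, (A j).natDegree = 2*m+1 := by
    intro j
    rw [hA, (monic_X_add_C _).natDegree_mul (hprodm j), natDegree_X_add_C,
      natDegree_prod_of_monic _ _ fun i _ => monic_X_sub_C _]
    simp only [natDegree_X_sub_C, Finset.sum_const, Finset.card_univ, Fintype.card_fin,
      smul_eq_mul, mul_one]
    omega
  set c : K := 2 - ∑ j, wgt z j with hc
  set W : K[X] := Q + P - ∑ j, C (wgt z j) * A j with hW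
  have hzinj : Function.Injective z := fun a b h => by
    by_contra hne; exact hd a b hne h
  have hz0 : ∀ l, z l ≠ 0 := fun l h => hs l l (by rw [h, add_zero])
  have hWP : W = C c * P := by
    rw [← sub_eq_zero]
    refine Polynomial.eq_zero_of_natDegree_lt_card_of_eval_eq_zero _ hzinj ?_ ?_
    · intro l
      have hPz : P.eval (z l) = 0 := by
        rw [hP, eval_prod]
        exact Finset.prod_eq_zero (Finset.mem_univ l) (by simp)
      have hQz : Q.eval (z l) = (z l + z l) * ∏ i : Fin (2*m), (z l + z (l.succAbove i)) := by
        rw [hQ, eval_prod]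
        simp only [eval_add, eval_X, eval_C]
        exact Fin.prod_univ_succAbove (fun j => z l + z j) l
      have hAz : ∀ j, j ≠ l → (A j).eval (z l) = 0 := by
        intro j hj
        obtain ⟨i, hi⟩ := Fin.exists_succAbove_eq (show l ≠ j from Ne.symm hj)
        simp only [hA, eval_mul, eval_prod, eval_add, eval_sub, eval_X, eval_C]
        refine mul_eq_zero_of_right _ (Finset.prod_eq_zero (Finset.mem_univ i) ?_)
        rw [hi, sub_self]
      have hAl : (A l).eval (z l)
          = (z l + z l) * ∏ i : Fin (2*m), (z l - z (l.succAbove i)) := by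
        simp only [hA, eval_mul, eval_prod, eval_add, eval_sub, eval_X, eval_C]
      rw [hW]
      simp only [eval_sub, eval_add, eval_mul, eval_C, eval_finset_sum]
      rw [hPz, hQz, Finset.sum_eq_single l (fun j _ hj => by rw [hAz j hj, mul_zero])
        (fun h => absurd (Finset.mem_univ l) h), hAl, ← wgt_mul z hd l]
      ring
    · rw [Fintype.card_fin]
      have hle : (W - C c * P).natDegree ≤ 2*m := by
        refine natDegree_le_iff_coeff_eq_zero.mpr fun M hM => ?_
        have hM' : 2*m+1 ≤ M := hM
        have hAc : ∀ j, (A j).coeff M = if M = 2*m+1 then 1 else 0 :=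
          fun j => coeff_of_monic (hAm j) (hAd j) hM'
        rw [hW]
        simp only [coeff_sub, coeff_add, Polynomial.finset_sum_coeff, coeff_C_mul,
          coeff_of_monic hPm hPd hM', coeff_of_monic hQm hQd hM', hAc]
        rcases eq_or_lt_of_le hM' with rfl | hM''
        · simp
          rw [hc]; ring
        · simp only [if_neg (by omega : ¬ M = 2*m+1), mul_zero, Finset.sum_const_zero,
            mul_zero]; ring
      omega
  have h2 : (2 : K) ≠ 0 := by
    intro h
    exact hs 0 0 (by rw [← two_mul, h, zero_mul])
  have hprodz : (∏ j, z j) ≠ 0 := Finset.prod_ne_zero_iff.mpr fun j _ => hz0 j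
  have h00 := congrArg (eval 0) hWP
  have hP0 : P.eval 0 = -∏ j, z j := by
    rw [hP, eval_prod]
    simp only [eval_sub, eval_X, eval_C, zero_sub]
    exact prod_neg_odd z
  have hQ0 : Q.eval 0 = ∏ j, z j := by
    rw [hQ, eval_prod]; simp
  have hA0 : ∀ j, (A j).eval 0 = ∏ l, z l := by
    intro j
    simp only [hA, eval_mul, eval_prod, eval_add, eval_sub, eval_X, eval_C, zero_add, zero_sub]
    rw [prod_neg_even (fun i => z (j.succAbove i))]
    exact (Fin.prod_univ_succAbove z j).symm
  rw [hW] at h00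
  simp only [eval_sub, eval_add, eval_mul, eval_C, eval_finset_sum] at h00
  rw [hP0, hQ0] at h00
  simp only [hA0] at h00
  have h1 : (∑ j, wgt z j) * ∏ j, z j = c * ∏ j, z j := by
    rw [← Finset.sum_mul] at h00
    linear_combination (-1 : K) * h00
  have hsum_c : ∑ j, wgt z j = c := mul_right_cancel₀ hprodz h1
  rw [hc] at hsum_c
  have : (2:K) * ∑ j, wgt z j = 2 * 1 := by linear_combination hsum_c
  exact mul_left_cancel₀ h2 this

private lemma dagger (hd : ∀ i j, i ≠ j → z i ≠ z j) (hs : ∀ i j, z i + z j ≠ 0) (t0 : K) :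
    ∏ j, (t0 - z j)
      = ∑ j, wgt z j * ((t0 - z j) * ∏ i : Fin (2*m), (t0 + z (j.succAbove i))) := by
  classical
  set P : K[X] := ∏ j : Fin (2*m+1), (X - C (z j)) with hP
  set B : Fin (2*m+1) → K[X] :=
    fun j => (X - C (z j)) * ∏ i : Fin (2*m), (X + C (z (j.succAbove i))) with hB
  have hPm : P.Monic := monic_prod_of_monic _ _ fun j _ => monic_X_sub_C _
  have hPd : P.natDegree = 2*m+1 := by
    rw [hP, natDegree_prod_of_monic _ _ fun j _ => monic_X_sub_C _]; simp
  have hprodm : ∀ j : Fin (2*m+1),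
      (∏ i : Fin (2*m), (X + C (z (j.succAbove i))) : K[X]).Monic :=
    fun j => monic_prod_of_monic _ _ fun i _ => monic_X_add_C _
  have hBm : ∀ j, (B j).Monic := fun j => (monic_X_sub_C _).mul (hprodm j)
  have hBd : ∀ j, (B j).natDegree = 2*m+1 := by
    intro j
    rw [hB, (monic_X_sub_C _).natDegree_mul (hprodm j), natDegree_X_sub_C,
      natDegree_prod_of_monic _ _ fun i _ => monic_X_add_C _]
    simp only [natDegree_X_add_C, Finset.sum_const, Finset.card_univ, Fintype.card_fin,
      smul_eq_mul, mul_one]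
    omega
  have hzinj : Function.Injective (fun l => -(z l)) := by
    intro a b h
    simp only [neg_inj] at h
    by_contra hne; exact hd a b hne h
  have key : P - ∑ j, C (wgt z j) * B j = 0 := by
    refine Polynomial.eq_zero_of_natDegree_lt_card_of_eval_eq_zero _ hzinj ?_ ?_
    · intro l
      have hplus : ∏ i : Fin (2*m), (-(z l) - z (l.succAbove i))
          = ∏ i : Fin (2*m), (z l + z (l.succAbove i)) := by
        rw [← prod_neg_even (fun i => z l + z (l.succAbove i))]
        exact Finset.prod_congr rfl fun i _ => by ring
      have hminus : ∏ i : Fin (2*m), (-(z l) + z (l.succAbove i))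
          = ∏ i : Fin (2*m), (z l - z (l.succAbove i)) := by
        rw [← prod_neg_even (fun i => z l - z (l.succAbove i))]
        exact Finset.prod_congr rfl fun i _ => by ring
      have hPe : P.eval (-(z l)) = (-(z l) - z l) * ∏ i : Fin (2*m), (z l + z (l.succAbove i)) := by
        rw [hP, eval_prod]
        simp only [eval_sub, eval_X, eval_C]
        rw [Fin.prod_univ_succAbove (fun j => -(z l) - z j) l, hplus]
      have hBz : ∀ j, j ≠ l → (B j).eval (-(z l)) = 0 := by
        intro j hj
        obtain ⟨i, hi⟩ := Fin.exists_succAbove_eq (show l ≠ j from Ne.symm hj)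
        simp only [hB, eval_mul, eval_prod, eval_add, eval_sub, eval_X, eval_C]
        refine mul_eq_zero_of_right _ (Finset.prod_eq_zero (Finset.mem_univ i) ?_)
        rw [hi]; ring
      have hBl : (B l).eval (-(z l))
          = (-(z l) - z l) * ∏ i : Fin (2*m), (z l - z (l.succAbove i)) := by
        simp only [hB, eval_mul, eval_prod, eval_add, eval_sub, eval_X, eval_C]
        rw [hminus]
      simp only [eval_sub, eval_finset_sum, eval_mul, eval_C]
      rw [hPe, Finset.sum_eq_single l (fun j _ hj => by rw [hBz j hj, mul_zero])
        (fun h => absurd (Finset.mem_univ l) h), hBl, ← wgt_mul z hd l]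
      ring
    · rw [Fintype.card_fin]
      have hle : (P - ∑ j, C (wgt z j) * B j).natDegree ≤ 2*m := by
        refine natDegree_le_iff_coeff_eq_zero.mpr fun M hM => ?_
        have hM' : 2*m+1 ≤ M := hM
        have hBc : ∀ j, (B j).coeff M = if M = 2*m+1 then 1 else 0 :=
          fun j => coeff_of_monic (hBm j) (hBd j) hM'
        simp only [coeff_sub, Polynomial.finset_sum_coeff, coeff_C_mul,
          coeff_of_monic hPm hPd hM', hBc]
        rcases eq_or_lt_of_le hM' with rfl | hM''
        · simp only [if_pos rfl, mul_one, eq_self_iff_true, if_true]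
          rw [sum_wgt z hd hs]; ring
        · simp only [if_neg (by omega : ¬ M = 2*m+1), mul_zero, Finset.sum_const_zero]; ring
      omega
  have hPB : P = ∑ j, C (wgt z j) * B j := sub_eq_zero.mp key
  have hfin := congrArg (eval t0) hPB
  rw [hP] at hfin
  simp only [eval_prod, eval_finset_sum, eval_mul, eval_add, eval_sub, eval_X, eval_C, hB] at hfin
  exact hfin

end Dagger

private lemma keyK {K : Type*} [Field K] (m : ℕ) (x : Fin (2*m+2) → K)
    (hd : ∀ i j, i ≠ j → x i ≠ x j) (hs : ∀ i j, x i + x j ≠ 0) :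
    ∏ i, ∏ k ∈ Finset.Ioi i, (x i - x k)
      = ∑ j : Fin (2*m+1), (-1:K)^(j:ℕ) * (x 0 - x j.succ) *
          (∏ i : Fin (2*m), ((x 0 + x ((j.succAbove i).succ)) * (x j.succ + x ((j.succAbove i).succ)))) *
          ∏ i : Fin (2*m), ∏ k ∈ Finset.Ioi i, (x ((j.succAbove i).succ) - x ((j.succAbove k).succ)) := by
  have hdz : ∀ i j : Fin (2*m+1), i ≠ j → x i.succ ≠ x j.succ :=
    fun i j hij => hd _ _ (fun h => hij (Fin.succ_injective _ h))
  have hsz : ∀ i j : Fin (2*m+1), x i.succ + x j.succ ≠ 0 := fun i j => hs _ _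
  have hdag := dagger (fun l => x l.succ) hdz hsz (x 0)
  rw [pairs_cons (fun i k => x i - x k), hdag, Finset.sum_mul]
  refine Finset.sum_congr rfl fun j _ => ?_
  have hV := pairs_erase (-1 : K) (fun i k => x i.succ - x k.succ) (fun p q => by ring) j
  have hwm := wgt_mul (fun l => x l.succ) hdz j
  rw [hV, Finset.prod_mul_distrib, ← hwm]
  ring

private lemma X_add_ne_zero {n : ℕ} (i j : Fin n) :
    (MvPolynomial.X i + MvPolynomial.X j : MvPolynomial (Fin n) ℤ) ≠ 0 := by
  intro h
  have hc := congrArg (MvPolynomial.coeff (Finsupp.single i 1)) h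
  rcases eq_or_ne j i with rfl | hij
  · rw [MvPolynomial.coeff_add, MvPolynomial.coeff_X, MvPolynomial.coeff_zero] at hc
    norm_num at hc
  · rw [MvPolynomial.coeff_add, MvPolynomial.coeff_X, MvPolynomial.coeff_X',
      if_neg (fun hh => hij (Finsupp.single_left_injective one_ne_zero hh)),
      MvPolynomial.coeff_zero] at hc
    norm_num at hc

private lemma X_sub_ne_zero {n : ℕ} {i j : Fin n} (hij : j ≠ i) :
    (MvPolynomial.X i - MvPolynomial.X j : MvPolynomial (Fin n) ℤ) ≠ 0 := by
  intro h
  have hc := congrArg (MvPolynomial.coeff (Finsupp.single i 1)) h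
  rw [MvPolynomial.coeff_sub, MvPolynomial.coeff_X, MvPolynomial.coeff_X',
    if_neg (fun hh => hij (Finsupp.single_left_injective one_ne_zero hh)),
    MvPolynomial.coeff_zero] at hc
  norm_num at hc

private lemma keypolyF {F : Type*} [CommRing F] (m : ℕ) (y : Fin (2*m+2) → F) :
    ∏ i, ∏ k ∈ Finset.Ioi i, (y i - y k)
      = ∑ j : Fin (2*m+1), (-1:F)^(j:ℕ) * (y 0 - y j.succ) *
          (∏ i : Fin (2*m), ((y 0 + y ((j.succAbove i).succ)) * (y j.succ + y ((j.succAbove i).succ)))) *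
          ∏ i : Fin (2*m), ∏ k ∈ Finset.Ioi i,
            (y ((j.succAbove i).succ) - y ((j.succAbove k).succ)) := by
  classical
  have hZ : (∏ i, ∏ k ∈ Finset.Ioi i,
        (MvPolynomial.X i - MvPolynomial.X k) : MvPolynomial (Fin (2*m+2)) ℤ)
      = ∑ j : Fin (2*m+1), (-1)^(j:ℕ) * (MvPolynomial.X 0 - MvPolynomial.X j.succ) *
          (∏ i : Fin (2*m), ((MvPolynomial.X 0 + MvPolynomial.X ((j.succAbove i).succ)) *
            (MvPolynomial.X j.succ + MvPolynomial.X ((j.succAbove i).succ)))) *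
          ∏ i : Fin (2*m), ∏ k ∈ Finset.Ioi i,
            (MvPolynomial.X ((j.succAbove i).succ) - MvPolynomial.X ((j.succAbove k).succ)) := by
    set A := MvPolynomial (Fin (2*m+2)) ℚ
    set K := FractionRing A
    set φ : MvPolynomial (Fin (2*m+2)) ℤ →+* K :=
      (algebraMap A K).comp (MvPolynomial.map (Int.castRingHom ℚ)) with hφdef
    have hφ : Function.Injective φ :=
      (IsFractionRing.injective A K).comp
        (MvPolynomial.map_injective (Int.castRingHom ℚ) Int.cast_injective)
    apply hφ
    simp only [map_prod, map_sum, map_mul, map_sub, map_add, map_pow, map_neg, map_one]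
    exact keyK m (fun i => φ (MvPolynomial.X i))
      (fun i j hij h => absurd (hφ h) (X_sub_ne_zero (Ne.symm hij) ∘ sub_eq_zero.mpr))
      (fun i j h => X_add_ne_zero i j (hφ (by rw [map_add, h, map_zero])))
  have := congrArg (MvPolynomial.aeval y) hZ
  simpa only [map_prod, map_sum, map_mul, map_sub, map_add, map_pow, map_neg, map_one,
    MvPolynomial.aeval_X] using this

private lemma key {F : Type*} [Field F] (m : ℕ) (y : Fin (2*m+2) → F)
    (hy : ∀ i j, y i + y j ≠ 0) :
    ∑ j : Fin (2*m+1), (-1:F)^(j:ℕ) * ((y 0 - y j.succ) / (y 0 + y j.succ)) *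
        ∏ i : Fin (2*m), ∏ k ∈ Finset.Ioi i,
          ((y ((j.succAbove i).succ) - y ((j.succAbove k).succ)) /
            (y ((j.succAbove i).succ) + y ((j.succAbove k).succ)))
      = ∏ i, ∏ k ∈ Finset.Ioi i, (y i - y k) / (y i + y k) := by
  have hDPU : (∏ i, ∏ k ∈ Finset.Ioi i, (y i + y k)) ≠ 0 :=
    Finset.prod_ne_zero_iff.mpr fun i _ =>
      Finset.prod_ne_zero_iff.mpr fun k _ => hy i k
  calc
    ∑ j : Fin (2*m+1), (-1:F)^(j:ℕ) * ((y 0 - y j.succ) / (y 0 + y j.succ)) *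
        ∏ i : Fin (2*m), ∏ k ∈ Finset.Ioi i,
          ((y ((j.succAbove i).succ) - y ((j.succAbove k).succ)) /
            (y ((j.succAbove i).succ) + y ((j.succAbove k).succ)))
      = ∑ j : Fin (2*m+1), ((-1:F)^(j:ℕ) * (y 0 - y j.succ) *
          (∏ i : Fin (2*m), ((y 0 + y ((j.succAbove i).succ)) *
            (y j.succ + y ((j.succAbove i).succ)))) *
          ∏ i : Fin (2*m), ∏ k ∈ Finset.Ioi i,
            (y ((j.succAbove i).succ) - y ((j.succAbove k).succ))) /
          ∏ i, ∏ k ∈ Finset.Ioi i, (y i + y k) := by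
        refine Finset.sum_congr rfl fun j _ => ?_
        have hsplit : (∏ i, ∏ k ∈ Finset.Ioi i, (y i + y k))
            = (y 0 + y j.succ) * ((∏ i : Fin (2*m), (y 0 + y ((j.succAbove i).succ))) *
              ((∏ i : Fin (2*m), (y j.succ + y ((j.succAbove i).succ))) *
                ∏ i : Fin (2*m), ∏ k ∈ Finset.Ioi i,
                  (y ((j.succAbove i).succ) + y ((j.succAbove k).succ)))) := by
          rw [pairs_cons (fun i k => y i + y k),
            Fin.prod_univ_succAbove (fun l => y 0 + y l.succ) j]
          have h2 := pairs_erase (1:F) (fun i k => y i.succ + y k.succ) (fun p q => by ring) j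
          simp only [one_pow, one_mul] at h2
          rw [h2]
          ring
        have h0 : y 0 + y j.succ ≠ 0 := hy _ _
        have hA : (∏ i : Fin (2*m), (y 0 + y ((j.succAbove i).succ))) ≠ 0 :=
          Finset.prod_ne_zero_iff.mpr fun i _ => hy _ _
        have hB : (∏ i : Fin (2*m), (y j.succ + y ((j.succAbove i).succ))) ≠ 0 :=
          Finset.prod_ne_zero_iff.mpr fun i _ => hy _ _
        have hD : (∏ i : Fin (2*m), ∏ k ∈ Finset.Ioi i,
            (y ((j.succAbove i).succ) + y ((j.succAbove k).succ))) ≠ 0 :=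
          Finset.prod_ne_zero_iff.mpr fun i _ =>
            Finset.prod_ne_zero_iff.mpr fun k _ => hy _ _
        simp only [Finset.prod_div_distrib]
        rw [hsplit, Finset.prod_mul_distrib]
        field_simp
    _ = (∑ j : Fin (2*m+1), (-1:F)^(j:ℕ) * (y 0 - y j.succ) *
          (∏ i : Fin (2*m), ((y 0 + y ((j.succAbove i).succ)) *
            (y j.succ + y ((j.succAbove i).succ)))) *
          ∏ i : Fin (2*m), ∏ k ∈ Finset.Ioi i,
            (y ((j.succAbove i).succ) - y ((j.succAbove k).succ))) /
          ∏ i, ∏ k ∈ Finset.Ioi i, (y i + y k) := by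
        rw [Finset.sum_div]
    _ = ∏ i, ∏ k ∈ Finset.Ioi i, (y i - y k) / (y i + y k) := by
        rw [← keypolyF m y]
        simp only [Finset.prod_div_distrib]


/-- Schur's Pfaffian identity:
Pf ((y_i - y_j)/(y_i + y_j))_{i,j} = ∏_{i<j} (y_i - y_j)/(y_i + y_j). -/
theorem schur_pfaffian {F : Type*} [Field F] (m : ℕ) (y : Fin (2*m) → F)
    (hy : ∀ i j, y i + y j ≠ 0) :
    pf m (Matrix.of fun i j => (y i - y j) / (y i + y j))
      = ∏ i, ∏ j ∈ Finset.Ioi i, (y i - y j) / (y i + y j) := by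
  induction m with
  | zero =>
      rw [pf]
      haveI : IsEmpty (Fin (2*0)) := ⟨fun i => absurd i.2 (by omega)⟩
      rw [Finset.univ_eq_empty, Finset.prod_empty]
  | succ m ih =>
      rw [pf]
      have hterm : ∀ j : Fin (2*m+1),
          pf m ((Matrix.of fun i j => (y i - y j) / (y i + y j)).submatrix
            (fun i => (j.succAbove i).succ) (fun i => (j.succAbove i).succ))
          = ∏ i : Fin (2*m), ∏ k ∈ Finset.Ioi i,
              ((y ((j.succAbove i).succ) - y ((j.succAbove k).succ)) /
                (y ((j.succAbove i).succ) + y ((j.succAbove k).succ))) :=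
        fun j => ih (fun i => y ((j.succAbove i).succ)) (fun i k => hy _ _)
      simp only [hterm, Matrix.of_apply]
      exact key m y hy
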